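/- If G is an incomparability graph, then Udim(G) ≤ s(G) − 1 (assuming G is connected and not complete), where s(G) is the maximum number of leaves of an induced star in G. -/

import Mathlib

open SimpleGraph

variable {V : Type*}

/-- An ordered clique cover of `G`, encoded as a labeling `f : V → ℕ` whose
fibers (the cliques `C_i = f⁻¹(i)`) are cliques of `G`. -/
def IsOrderedCliqueCover (G : SimpleGraph V) (f : V → ℕ) : Prop :=
  ∀ n : ℕ, G.IsClique {v | f v = n}

/-- The width `W(C)` of an ordered clique cover: the maximum of `|j - i|` over
edges `xy` of `G` with `x ∈ C_i`, `y ∈ C_j`. -/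
noncomputable def coverWidth (G : SimpleGraph V) (f : V → ℕ) : ℕ :=
  sSup {d : ℕ | ∃ x y, G.Adj x y ∧ d = Nat.dist (f x) (f y)}

/-- The clique cover width `CCW(G)`: minimum width over ordered clique covers. -/
noncomputable def CCW (G : SimpleGraph V) : ℕ :=
  sInf {w : ℕ | ∃ f : V → ℕ, IsOrderedCliqueCover G f ∧ coverWidth G f = w}

/-- `s(G)`: the maximum number of leaves of an induced star in `G`
(an independent set whose members are all adjacent to a common center `r`
outside the set); defined as `1` when `|V(G)| ≤ 2`. -/
noncomputable def starNum (G : SimpleGraph V) [Fintype V] : ℕ :=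
  if Fintype.card V ≤ 2 then 1
  else sSup {k : ℕ | ∃ (r : V) (L : Finset V), r ∉ L ∧ Gᶜ.IsClique (L : Set V) ∧
    (∀ v ∈ L, G.Adj r v) ∧ L.card = k}

/-- `Udim(G)`: the smallest `d` such that `G` is the intersection of `d`
unit incomparability graphs (graphs `H` with `CCW(H) ≤ 1`) on `V(G)`. -/
noncomputable def Udim (G : SimpleGraph V) : ℕ :=
  sInf {d : ℕ | ∃ H : Fin d → SimpleGraph V, (∀ i, CCW (H i) ≤ 1) ∧
    ∀ x y, G.Adj x y ↔ ∀ i, (H i).Adj x y}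

section Aux
open Classical
variable {W : Type*} [Fintype W] (D : W → W → Prop) (wf : WellFounded D)

noncomputable def htfn : W → ℕ :=
  wf.fix (fun v ih => Finset.univ.sup fun u : W => if h : D u v then ih u h + 1 else 0)

lemma htfn_eq (v : W) :
    htfn D wf v = Finset.univ.sup (fun u : W => if h : D u v then htfn D wf u + 1 else 0) := by
  conv_lhs => rw [htfn, WellFounded.fix_eq]
  rfl

lemma htfn_lt {u v : W} (h : D u v) : htfn D wf u < htfn D wf v := by
  have hle := Finset.le_sup (f := fun u : W => if h : D u v then htfn D wf u + 1 else 0)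
    (Finset.mem_univ u)
  rw [← htfn_eq] at hle
  simp only [h, dif_pos] at hle
  omega

lemma htfn_succ {v : W} {n : ℕ} (h : htfn D wf v = n + 1) :
    ∃ u, D u v ∧ htfn D wf u = n := by
  obtain ⟨u, -, hu⟩ := Finset.exists_mem_eq_sup (Finset.univ : Finset W) ⟨v, Finset.mem_univ v⟩
    (fun u : W => if h : D u v then htfn D wf u + 1 else 0)
  rw [← htfn_eq, h] at hu
  by_cases hD : D u v
  · simp only [hD, dif_pos] at hu
    exact ⟨u, hD, by omega⟩
  · simp [hD] at hu

lemma htfn_chain : ∀ (n : ℕ) (v : W), htfn D wf v = n →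
    ∃ c : ℕ → W, c n = v ∧ (∀ j, j < n → D (c j) (c (j+1))) ∧
      (∀ j ≤ n, htfn D wf (c j) = j) := by
  intro n
  induction n with
  | zero =>
    intro v hv
    refine ⟨fun _ => v, rfl, by omega, ?_⟩
    intro j hj
    have : j = 0 := by omega
    simp [this, hv]
  | succ n IH =>
    intro v hv
    obtain ⟨u, hD, hu⟩ := htfn_succ D wf hv
    obtain ⟨c, hc1, hc2, hc3⟩ := IH u hu
    refine ⟨fun j => if j ≤ n then c j else v, by simp, ?_, ?_⟩
    · intro j hj
      by_cases hjn : j + 1 ≤ n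
      · simpa [hjn, show j ≤ n by omega] using hc2 j (by omega)
      · have hje : j = n := by omega
        subst hje
        simpa [hc1] using hD
    · intro j hj
      by_cases hjn : j ≤ n
      · simpa [hjn] using hc3 j hjn
      · have : j = n + 1 := by omega
        simp [this, hv]

end Aux

lemma div_dist_le (w i : ℕ) (hw : 0 < w) (a b : ℕ) (h : Nat.dist a b ≤ w) :
    Nat.dist ((a + i) / w) ((b + i) / w) ≤ 1 := by
  rcases le_total a b with hab | hab
  · rw [Nat.dist_eq_sub_of_le hab] at h
    have m1 : (a + i) / w ≤ (b + i) / w := Nat.div_le_div_right (by omega)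
    have m2 : (b + i) / w ≤ (a + i) / w + 1 :=
      le_trans (Nat.div_le_div_right (show b + i ≤ a + i + w by omega))
        (le_of_eq (Nat.add_div_right _ hw))
    rw [Nat.dist_eq_sub_of_le m1]
    set x := (a + i) / w
    set y := (b + i) / w
    omega
  · rw [Nat.dist_eq_sub_of_le_right hab] at h
    have m1 : (b + i) / w ≤ (a + i) / w := Nat.div_le_div_right (by omega)
    have m2 : (a + i) / w ≤ (b + i) / w + 1 :=
      le_trans (Nat.div_le_div_right (show a + i ≤ b + i + w by omega))
        (le_of_eq (Nat.add_div_right _ hw))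
    rw [Nat.dist_eq_sub_of_le_right m1]
    set x := (a + i) / w
    set y := (b + i) / w
    omega

lemma div_sep (w : ℕ) (hw : 0 < w) (a b : ℕ) (hab : a < b) :
    ∃ i < w, (a + i) / w < (b + i) / w := by
  obtain ⟨q, r, hr, rfl⟩ : ∃ q r, r < w ∧ a = w * q + r :=
    ⟨a / w, a % w, Nat.mod_lt _ hw, (Nat.div_add_mod a w).symm⟩
  refine ⟨w - 1 - r, by omega, ?_⟩
  have e1 : w * q + r + (w - 1 - r) = w * q + (w - 1) := by omega
  have e2 : (w * q + r + (w - 1 - r)) / w = q := by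
    rw [e1, Nat.mul_add_div hw, Nat.div_eq_of_lt (show w - 1 < w by omega), Nat.add_zero]
  have e3 : q + 1 ≤ (b + (w - 1 - r)) / w := by
    rw [Nat.le_div_iff_mul_le hw, add_mul, one_mul]
    have h4 : q * w = w * q := by ring
    omega
  rw [e2]
  exact Nat.lt_of_lt_of_le (Nat.lt_succ_self q) e3

def Hgraph (G : SimpleGraph V) (gv : V → ℕ) : SimpleGraph V where
  Adj a b := a ≠ b ∧ (G.Adj a b ∨ gv a = gv b)
  symm := ⟨by
    rintro a b ⟨hne, h⟩
    exact ⟨hne.symm, h.imp SimpleGraph.Adj.symm Eq.symm⟩⟩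
  loopless := ⟨fun a h => h.1 rfl⟩

lemma Hgraph_adj (G : SimpleGraph V) (gv : V → ℕ) (a b : V) :
    (Hgraph G gv).Adj a b ↔ a ≠ b ∧ (G.Adj a b ∨ gv a = gv b) := Iff.rfl

lemma star2 (G : SimpleGraph V) {a b : V} (p : G.Walk a b) :
    a ≠ b → ¬G.Adj a b → ∃ r u v : V, u ≠ v ∧ ¬G.Adj u v ∧ G.Adj r u ∧ G.Adj r v := by
  induction p with
  | nil => intro h _; exact absurd rfl h
  | @cons x c y h q ih =>
    intro hne hna
    by_cases hcb : c = y
    · subst hcb; exact absurd h hna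
    · by_cases hacb : G.Adj c y
      · exact ⟨c, x, y, hne, hna, h.symm, hacb⟩
      · exact ih hcb hacb

/-- for a connected, non-complete incomparability graph `G`,
`Udim(G) ≤ s(G) - 1`. -/
theorem stmt17 [Fintype V] (G : SimpleGraph V) (D : V → V → Prop)
    (h1 : ∀ x y, Gᶜ.Adj x y ↔ D x y ∨ D y x)
    (h2 : ∀ x y, D x y → ¬ D y x) (h3 : Transitive D)
    (hc : G.Connected) (hnc : G ≠ ⊤) :
    Udim G ≤ starNum G - 1 := by
  classical
  haveI : IsIrrefl V D := ⟨fun a h => h2 a a h h⟩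
  haveI : IsTrans V D := ⟨fun a b c hab hbc => h3 hab hbc⟩
  have wf : WellFounded D := Finite.wellFounded_of_trans_of_irrefl D
  set f : V → ℕ := htfn D wf with hfdef
  have hAdjD : ∀ x y : V, G.Adj x y → ¬D x y ∧ ¬D y x := by
    intro x y h
    constructor <;> intro hd
    · exact ((G.compl_adj x y).mp ((h1 x y).mpr (Or.inl hd))).2 h
    · exact ((G.compl_adj x y).mp ((h1 x y).mpr (Or.inr hd))).2 h
  have hcomp : ∀ x y : V, x ≠ y → ¬G.Adj x y → D x y ∨ D y x := by
    intro x y hne hna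
    exact (h1 x y).mp ((G.compl_adj x y).mpr ⟨hne, hna⟩)
  have hAdj_of : ∀ x y : V, x ≠ y → ¬D x y → ¬D y x → G.Adj x y := by
    intro x y hne hd1 hd2
    by_contra hna
    rcases hcomp x y hne hna with h | h
    · exact hd1 h
    · exact hd2 h
  have hflt : ∀ u v : V, D u v → f u < f v := by
    intro u v h
    rw [hfdef]
    exact htfn_lt D wf h
  set S : Set ℕ := {k : ℕ | ∃ (r : V) (L : Finset V), r ∉ L ∧ Gᶜ.IsClique (L : Set V) ∧
    (∀ v ∈ L, G.Adj r v) ∧ L.card = k} with hSdef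
  have hbdd : BddAbove S := by
    refine ⟨Fintype.card V, ?_⟩
    rintro k ⟨r, L, -, -, -, rfl⟩
    simpa using Finset.card_le_univ L
  obtain ⟨x0, y0, hne0, hna0⟩ : ∃ x y : V, x ≠ y ∧ ¬G.Adj x y := by
    by_contra h
    push_neg at h
    apply hnc
    ext x y
    simp only [SimpleGraph.top_adj]
    exact ⟨fun h' => h'.ne, fun hne => h x y hne⟩
  obtain ⟨p⟩ := hc.preconnected x0 y0
  obtain ⟨r0, u0, v0, huv, hnuv, hru, hrv⟩ := star2 G p hne0 hna0
  have h2S : 2 ∈ S := by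
    refine ⟨r0, {u0, v0}, ?_, ?_, ?_, ?_⟩
    · simp only [Finset.mem_insert, Finset.mem_singleton]
      rintro (rfl | rfl)
      · exact hru.ne rfl
      · exact hrv.ne rfl
    · intro a ha b hb hab
      simp only [Finset.coe_insert, Finset.coe_singleton, Set.mem_insert_iff,
        Set.mem_singleton_iff] at ha hb
      rcases ha with rfl | rfl <;> rcases hb with rfl | rfl
      · exact absurd rfl hab
      · exact (G.compl_adj _ _).mpr ⟨huv, hnuv⟩
      · exact (G.compl_adj _ _).mpr ⟨huv.symm, fun h => hnuv h.symm⟩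
      · exact absurd rfl hab
    · intro v hv
      simp only [Finset.mem_insert, Finset.mem_singleton] at hv
      rcases hv with rfl | rfl
      · exact hru
      · exact hrv
    · rw [Finset.card_insert_of_notMem (by simpa using huv), Finset.card_singleton]
  have hcard3 : ¬ Fintype.card V ≤ 2 := by
    intro hle
    have h1c : ({r0, u0, v0} : Finset V).card = 3 := by
      rw [Finset.card_insert_of_notMem (by simp [hru.ne, hrv.ne]),
        Finset.card_insert_of_notMem (by simpa using huv), Finset.card_singleton]
    have h2c := Finset.card_le_univ ({r0, u0, v0} : Finset V)
    rw [h1c] at h2c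
    omega
  have hsn : starNum G = sSup S := by
    rw [starNum, if_neg hcard3, hSdef]
  have hs2 : 2 ≤ sSup S := le_csSup hbdd h2S
  -- the key width bound
  have hwidth : ∀ x y : V, G.Adj x y → f y ≤ f x + (sSup S - 1) := by
    intro x y hadj
    by_contra hgt
    push_neg at hgt
    obtain ⟨c, hcy, hcD, hcht0⟩ := htfn_chain D wf (f y) y (by rw [hfdef])
    have hcht : ∀ j ≤ f y, f (c j) = j := by
      intro j hj
      rw [hfdef]
      exact hcht0 j hj
    have hDc : ∀ j', j' ≤ f y → ∀ j, j < j' → D (c j) (c j') := by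
      intro j'
      induction j' with
      | zero => intro _ j hj; omega
      | succ k IH =>
        intro hle j hj
        rcases Nat.lt_succ_iff_lt_or_eq.mp hj with h | h
        · exact h3 (IH (by omega) j h) (hcD k (by omega))
        · subst h; exact hcD j (by omega)
    have hxy := hAdjD x y hadj
    have hfxy : f x < f y := by omega
    have hDjy : ∀ j, j < f y → D (c j) y := by
      intro j hlt
      have := hDc (f y) le_rfl j hlt
      rwa [hcy] at this
    have hAdjxc : ∀ j, f x ≤ j → j ≤ f y → G.Adj x (c j) := by
      intro j hj1 hj2
      have hfcj : f (c j) = j := hcht j hj2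
      have hnDcx : ¬D (c j) x := by
        intro hD
        have := hflt _ _ hD
        omega
      have hnDxc : ¬D x (c j) := by
        intro hD
        rcases eq_or_lt_of_le hj2 with he | hlt'
        · subst he
          rw [hcy] at hD
          exact hxy.1 hD
        · exact hxy.1 (h3 hD (hDjy j hlt'))
      have hnex : x ≠ c j := by
        intro he
        have hfx : f x = j := by rw [he]; exact hfcj
        have hd := hDjy j (by omega)
        rw [← he] at hd
        exact hxy.1 hd
      exact hAdj_of x (c j) hnex hnDxc hnDcx
    have hinj : Set.InjOn c (Finset.Icc (f x) (f y) : Finset ℕ) := by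
      intro a2 ha2 b2 hb2 he
      have ha2' := Finset.mem_Icc.mp (Finset.mem_coe.mp ha2)
      have hb2' := Finset.mem_Icc.mp (Finset.mem_coe.mp hb2)
      have e1 : f (c a2) = a2 := hcht a2 ha2'.2
      have e2 : f (c b2) = b2 := hcht b2 hb2'.2
      rw [he] at e1
      omega
    have hcardL : ((Finset.Icc (f x) (f y)).image c).card = f y - f x + 1 := by
      rw [Finset.card_image_of_injOn hinj, Nat.card_Icc]
      omega
    have hmem : ((Finset.Icc (f x) (f y)).image c).card ∈ S := by
      refine ⟨x, (Finset.Icc (f x) (f y)).image c, ?_, ?_, ?_, rfl⟩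
      · intro hxL
        simp only [Finset.mem_image, Finset.mem_Icc] at hxL
        obtain ⟨j, ⟨hj1, hj2⟩, hje⟩ := hxL
        exact (hAdjxc j hj1 hj2).ne hje.symm
      · intro a2 ha2 b2 hb2 hne2
        simp only [Finset.coe_image, Set.mem_image, Finset.mem_coe, Finset.mem_Icc] at ha2 hb2
        obtain ⟨ja, hja, rfl⟩ := ha2
        obtain ⟨jb, hjb, rfl⟩ := hb2
        have hjne : ja ≠ jb := fun h => hne2 (by rw [h])
        refine (h1 _ _).mpr ?_
        rcases lt_or_gt_of_ne hjne with h | h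
        · exact Or.inl (hDc jb hjb.2 ja h)
        · exact Or.inr (hDc ja hja.2 jb h)
      · intro v hv
        simp only [Finset.mem_image, Finset.mem_Icc] at hv
        obtain ⟨j, hj, rfl⟩ := hv
        exact hAdjxc j hj.1 hj.2
    have hle := le_csSup hbdd hmem
    omega
  have hdist : ∀ x y : V, G.Adj x y → Nat.dist (f x) (f y) ≤ sSup S - 1 := by
    intro x y h
    have ha := hwidth x y h
    have hb := hwidth y x h.symm
    rcases le_total (f x) (f y) with hle | hle
    · rw [Nat.dist_eq_sub_of_le hle]; omega
    · rw [Nat.dist_eq_sub_of_le_right hle]; omega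
  have hw : 0 < sSup S - 1 := by omega
  rw [hsn]
  apply Nat.sInf_le
  refine ⟨fun i : Fin (sSup S - 1) =>
    Hgraph G (fun v => (f v + i.val) / (sSup S - 1)), ?_, ?_⟩
  · intro i
    have hcov : IsOrderedCliqueCover (Hgraph G (fun v => (f v + i.val) / (sSup S - 1)))
        (fun v => (f v + i.val) / (sSup S - 1)) := by
      intro n a ha b hb hne
      have ha' : (f a + i.val) / (sSup S - 1) = n := ha
      have hb' : (f b + i.val) / (sSup S - 1) = n := hb
      refine ⟨hne, Or.inr ?_⟩
      show (f a + i.val) / (sSup S - 1) = (f b + i.val) / (sSup S - 1)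
      rw [ha', hb']
    have hwle : coverWidth (Hgraph G (fun v => (f v + i.val) / (sSup S - 1)))
        (fun v => (f v + i.val) / (sSup S - 1)) ≤ 1 := by
      unfold coverWidth
      refine csSup_le' ?_
      rintro d ⟨a, b, hab, rfl⟩
      rcases hab.2 with hadj | heq
      · exact div_dist_le (sSup S - 1) i.val hw (f a) (f b) (hdist a b hadj)
      · rw [heq, Nat.dist_self]
        exact Nat.zero_le 1
    calc CCW (Hgraph G (fun v => (f v + i.val) / (sSup S - 1)))
        ≤ coverWidth (Hgraph G (fun v => (f v + i.val) / (sSup S - 1)))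
          (fun v => (f v + i.val) / (sSup S - 1)) := Nat.sInf_le ⟨_, hcov, rfl⟩
      _ ≤ 1 := hwle
  · intro x y
    constructor
    · intro h i
      exact ⟨h.ne, Or.inl h⟩
    · intro hall
      by_contra hna
      have hne : x ≠ y := (hall ⟨0, hw⟩).1
      have hgeq : ∀ i : Fin (sSup S - 1),
          (f x + i.val) / (sSup S - 1) = (f y + i.val) / (sSup S - 1) := fun i =>
        ((hall i).2).resolve_left hna
      have hfne : f x ≠ f y := by
        intro he
        rcases hcomp x y hne hna with h | h
        · exact absurd he (Nat.ne_of_lt (hflt _ _ h))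
        · exact absurd he.symm (Nat.ne_of_lt (hflt _ _ h))
      rcases Nat.lt_or_ge (f x) (f y) with hlt | hge
      · obtain ⟨i, hiw, hsep⟩ := div_sep (sSup S - 1) hw (f x) (f y) hlt
        exact absurd (hgeq ⟨i, hiw⟩) (Nat.ne_of_lt hsep)
      · have hlt : f y < f x := by omega
        obtain ⟨i, hiw, hsep⟩ := div_sep (sSup S - 1) hw (f y) (f x) hlt
        exact absurd (hgeq ⟨i, hiw⟩).symm (Nat.ne_of_lt hsep)
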